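/- Let n be a positive integer and let π be a non-crossing partition of {1, ..., n} such that: (i) for every 1 ≤ i ≤ n−1, the numbers i and i+1 do not belong to the same block of π; and (ii) π has at most one block of cardinality 1. Then n is odd, and π is the partition {{1, n}, {2, n−1}, ..., {(n−1)/2, (n+3)/2}, {(n+1)/2}} (i.e., the blocks of π are exactly the pairs {m, n+1−m} for 1 ≤ m ≤ (n−1)/2 together with the singleton {(n+1)/2}). -/

import Mathlib

namespace InfFree

open scoped BigOperators

/-- `π` is a partition of `Fin n` into nonempty blocks. -/
def IsPartition {n : ℕ} (π : Finset (Finset (Fin n))) : Prop :=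
  (∀ V ∈ π, V.Nonempty) ∧ ∀ i : Fin n, ∃! V : Finset (Fin n), V ∈ π ∧ i ∈ V

/-- `π` is non-crossing: there are no `p < q < r < s` with `p, r` in one block and
`q, s` in another block. -/
def IsNonCrossing {n : ℕ} (π : Finset (Finset (Fin n))) : Prop :=
  ∀ p q r s : Fin n, p < q → q < r → r < s →
    ∀ V ∈ π, ∀ W ∈ π, p ∈ V → r ∈ V → q ∈ W → s ∈ W → V = W

open Classical in
/-- The finset `NC n` of non-crossing partitions of `Fin n`. -/
noncomputable def NC (n : ℕ) : Finset (Finset (Finset (Fin n))) :=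
  Finset.univ.filter fun π => IsPartition π ∧ IsNonCrossing π

/-- Restriction of an `n`-tuple to a subset `V ⊆ Fin n`, listed in increasing order. -/
def restrict {α : Type*} {n : ℕ} (a : Fin n → α) (V : Finset (Fin n)) :
    Fin V.card → α :=
  fun i => a (V.orderIsoOfFin rfl i).1

/-- `κ` is the family of `R`-valued non-crossing cumulant functionals of `φ`, i.e.
the moment-cumulant formulas hold. -/
def MomentCumulant {A : Type*} [Ring A] {R : Type*} [CommRing R]
    (φ : A → R) (κ : ∀ n : ℕ, (Fin n → A) → R) : Prop :=
  ∀ (n : ℕ), 1 ≤ n → ∀ a : Fin n → A,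
    φ (List.ofFn a).prod = ∑ π ∈ NC n, ∏ V ∈ π, κ V.card (restrict a V)

/-- `κ'` is the family of infinitesimal non-crossing cumulant functionals of
`(φ, φ')`, where `κ` is the family of non-crossing cumulant functionals of `φ`. -/
def InfMomentCumulant {A : Type*} [Ring A]
    (φ' : A → ℂ) (κ κ' : ∀ n : ℕ, (Fin n → A) → ℂ) : Prop :=
  ∀ (n : ℕ), 1 ≤ n → ∀ a : Fin n → A,
    φ' (List.ofFn a).prod =
      ∑ π ∈ NC n, ∑ V ∈ π,
        κ' V.card (restrict a V) * ∏ W ∈ π.erase V, κ W.card (restrict a W)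

/-- Consecutive indices are distinct. -/
def Alternating {n k : ℕ} (i : Fin n → Fin k) : Prop :=
  ∀ (m : ℕ) (h : m + 1 < n), i ⟨m, Nat.lt_of_succ_lt h⟩ ≠ i ⟨m + 1, h⟩

/-- Freeness of the family of subsets `S` with respect to `φ`. -/
def FreeSets {A : Type*} [Ring A] {k : ℕ} (φ : A → ℂ) (S : Fin k → Set A) : Prop :=
  ∀ (n : ℕ), 1 ≤ n → ∀ i : Fin n → Fin k, Alternating i →
    ∀ a : Fin n → A, (∀ m, a m ∈ S (i m)) → (∀ m, φ (a m) = 0) →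
      φ (List.ofFn a).prod = 0

/-- Infinitesimal freeness of the family of subsets `S` with respect to `(φ, φ')`. -/
def InfFreeSets {A : Type*} [Ring A] {k : ℕ} (φ φ' : A → ℂ) (S : Fin k → Set A) : Prop :=
  ∀ (n : ℕ) (hn : 1 ≤ n) (i : Fin n → Fin k), Alternating i →
    ∀ a : Fin n → A, (∀ m, a m ∈ S (i m)) → (∀ m, φ (a m) = 0) →
      φ (List.ofFn a).prod = 0 ∧
      ((Odd n ∧ ∀ m : Fin n, i m = i m.rev) →
        φ' (List.ofFn a).prod =
          (∏ j : Fin ((n - 1) / 2),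
              φ (a ⟨j, by have := j.isLt; omega⟩ *
                 a ⟨n - 1 - j, by have := j.isLt; omega⟩)) *
            φ' (a ⟨n / 2, by omega⟩)) ∧
      (¬(Odd n ∧ ∀ m : Fin n, i m = i m.rev) → φ' (List.ofFn a).prod = 0)

section Aux

variable {n : ℕ} {π : Finset (Finset (Fin n))}

lemma blocks_eq (hpart : IsPartition π) {V W : Finset (Fin n)} {x : Fin n}
    (hV : V ∈ π) (hW : W ∈ π) (hxV : x ∈ V) (hxW : x ∈ W) : V = W := by
  obtain ⟨U, -, hU⟩ := hpart.2 x
  rw [hU V ⟨hV, hxV⟩, hU W ⟨hW, hxW⟩]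

lemma lemA (hpart : IsPartition π) (hnc : IsNonCrossing π)
    (hconsec : ∀ V ∈ π, ∀ p q : Fin n, p ∈ V → q ∈ V → (q : ℕ) = (p : ℕ) + 1 → False) :
    ∀ d : ℕ, ∀ p q : Fin n, (q : ℕ) - (p : ℕ) ≤ d → p < q →
      ∀ V ∈ π, p ∈ V → q ∈ V →
      ∃ m : Fin n, ({m} : Finset (Fin n)) ∈ π ∧ p < m ∧ m < q := by
  intro d
  induction d with
  | zero => intro p q hle hlt; rw [Fin.lt_def] at hlt; omega
  | succ d ih =>
    intro p q hle hlt V hV hp hq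
    have hlt' : (p : ℕ) < q := hlt
    have hqn : (q : ℕ) < n := q.isLt
    have hpq2 : (p : ℕ) + 2 ≤ q := by
      rcases Nat.lt_or_ge ((p : ℕ) + 1) q with h | h
      · omega
      · exact absurd ((hconsec V hV p q hp hq (by omega))) (fun h => h)
    set m0 : Fin n := ⟨(p : ℕ) + 1, by omega⟩ with hm0def
    have hm0v : (m0 : ℕ) = (p : ℕ) + 1 := rfl
    obtain ⟨W, ⟨hW, hm0W⟩, -⟩ := hpart.2 m0
    have hWV : W ≠ V := by
      intro h; subst h; exact hconsec W hW p m0 hp hm0W rfl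
    have hWsub : ∀ w ∈ W, p < w ∧ w < q := by
      intro w hw
      constructor
      · rcases lt_trichotomy w p with h | h | h
        · exact absurd (hnc w p m0 q h (by rw [Fin.lt_def]; omega) (by rw [Fin.lt_def]; simp; omega)
            W hW V hV hw hm0W hp hq) hWV
        · exact absurd (blocks_eq hpart hW hV (h ▸ hw) hp) hWV
        · exact h
      · rcases lt_trichotomy w q with h | h | h
        · exact h
        · exact absurd (blocks_eq hpart hW hV (h ▸ hw) hq) hWV
        · exact absurd (hnc p m0 q w (by rw [Fin.lt_def]; omega) (by rw [Fin.lt_def]; simp; omega)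
            h V hV W hW hp hq hm0W hw).symm hWV
    by_cases hws : ∀ w ∈ W, w = m0
    · refine ⟨m0, ?_, (hWsub m0 hm0W).1, (hWsub m0 hm0W).2⟩
      have : W = {m0} := Finset.eq_singleton_iff_unique_mem.mpr ⟨hm0W, hws⟩
      rwa [this] at hW
    · push_neg at hws
      obtain ⟨w, hw, hwne⟩ := hws
      have h1 := hWsub w hw
      have h2 := hWsub m0 hm0W
      have hv1 : (p : ℕ) < (w : ℕ) ∧ (w : ℕ) < (q : ℕ) := ⟨h1.1, h1.2⟩
      have hm0w : m0 < w := by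
        rcases lt_or_gt_of_ne hwne with h | h
        · exfalso; rw [Fin.lt_def, hm0v] at h; omega
        · exact h
      obtain ⟨m, hm, h3, h4⟩ := ih m0 w (by omega) hm0w W hW hm0W hw
      exact ⟨m, hm, lt_trans h2.1 h3, lt_trans h4 h1.2⟩


lemma lemB (hpart : IsPartition π) (hnc : IsNonCrossing π)
    (hconsec : ∀ V ∈ π, ∀ p q : Fin n, p ∈ V → q ∈ V → (q : ℕ) = (p : ℕ) + 1 → False)
    (hsingle : ∀ V ∈ π, ∀ W ∈ π, V.card = 1 → W.card = 1 → V = W) :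
    ∀ d : ℕ, ∀ i : Fin n, (i : ℕ) < d → 2 * (i : ℕ) ≤ n - 1 →
      ∀ V ∈ π, i ∈ V → V = {i, i.rev} := by
  intro d
  induction d with
  | zero => intro i hi; omega
  | succ d ih =>
    intro i hid hi2 V hV hiV
    have hn1 : 1 ≤ n := Nat.pos_of_ne_zero (by rintro rfl; exact i.elim0)
    have hrev : (i.rev : ℕ) = n - 1 - i := by simp [Fin.val_rev]; omega
    have hin : (i : ℕ) < n := i.isLt
    -- IH restated
    have IH : ∀ j : Fin n, (j : ℕ) < (i : ℕ) → ∀ W ∈ π, j ∈ W → W = {j, j.rev} := by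
      intro j hj W hW hjW
      exact ih j (by omega) (by omega) W hW hjW
    have hrevval : ∀ c : Fin n, (c.rev : ℕ) = n - 1 - c := by
      intro c; simp [Fin.val_rev]; omega
    -- blocks of small/large elements, as a membership exclusion
    have hexcl : ∀ (W : Finset (Fin n)), W ∈ π → ∀ x ∈ W, ∀ c ∈ W,
        ((c : ℕ) < i → x = c ∨ x = c.rev) ∧ ((c : ℕ) > n - 1 - i → x = c.rev ∨ x = c) := by
      intro W hW x hx c hc
      constructor
      · intro hci
        have := IH c hci W hW hc
        subst this
        rcases Finset.mem_insert.mp hx with h | h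
        · exact Or.inl h
        · exact Or.inr (Finset.mem_singleton.mp h)
      · intro hcbig
        have hcrev : (c.rev : ℕ) < i := by rw [hrevval]; omega
        obtain ⟨U, ⟨hU, hcU⟩, -⟩ := hpart.2 c.rev
        have hUeq := IH c.rev hcrev U hU hcU
        have hcU2 : c ∈ U := by
          rw [hUeq]; rw [Fin.rev_rev]; exact Finset.mem_insert.mpr (Or.inr (Finset.mem_singleton.mpr rfl))
        have hWU : W = U := blocks_eq hpart hW hU hc hcU2
        subst hWU
        rw [hUeq, Fin.rev_rev] at hx
        rcases Finset.mem_insert.mp hx with h | h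
        · exact Or.inl h
        · exact Or.inr (Finset.mem_singleton.mp h)
    -- Step A: V ⊆ [i, rev i]
    have hVsub : ∀ c ∈ V, (i : ℕ) ≤ c ∧ (c : ℕ) ≤ n - 1 - i := by
      intro c hc
      constructor
      · by_contra h
        push_neg at h
        rcases (hexcl V hV i hiV c hc).1 h with he | he <;>
          rw [Fin.ext_iff] at he <;> rw [hrevval] at * <;> omega
      · by_contra h
        push_neg at h
        rcases (hexcl V hV i hiV c hc).2 h with he | he <;>
          rw [Fin.ext_iff] at he <;> rw [hrevval] at * <;> omega
    by_cases hmid : 2 * (i : ℕ) = n - 1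
    · -- middle element: V = {i} = {i, i.rev}
      have hrevi : i.rev = i := by rw [Fin.ext_iff, hrevval]; omega
      rw [hrevi]
      simp only [Finset.insert_eq_self.mpr (Finset.mem_singleton.mpr rfl)]
      apply Finset.eq_singleton_iff_unique_mem.mpr
      refine ⟨hiV, fun c hc => ?_⟩
      have := hVsub c hc
      rw [Fin.ext_iff]; omega
    have hilt : 2 * (i : ℕ) < n - 1 := lt_of_le_of_ne hi2 hmid
    -- helper: from a block W all of whose elements lie in (lo, n-1-i] containing
    -- element x0 with x0 = lo+1, produce a singleton block {m} with lo < m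
    have hsingleton_in : ∀ (W : Finset (Fin n)) (x0 : Fin n) (lo : ℕ), W ∈ π → x0 ∈ W →
        (x0 : ℕ) = lo + 1 → (∀ w ∈ W, lo < (w : ℕ)) →
        ∃ m : Fin n, ({m} : Finset (Fin n)) ∈ π ∧ lo < (m : ℕ) := by
      intro W x0 lo hW hx0 hx0v hWlo
      by_cases hws : ∀ w ∈ W, w = x0
      · have : W = {x0} := Finset.eq_singleton_iff_unique_mem.mpr ⟨hx0, hws⟩
        exact ⟨x0, this ▸ hW, by omega⟩
      · push_neg at hws
        obtain ⟨c, hc, hcne⟩ := hws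
        have hclo := hWlo c hc
        have hcne2 : (c : ℕ) ≠ lo + 2 := by
          intro h
          exact hconsec W hW x0 c hx0 hc (by omega)
        have hcne1 : (c : ℕ) ≠ lo + 1 := by
          intro h; exact hcne (by rw [Fin.ext_iff]; omega)
        have hx0c : x0 < c := by rw [Fin.lt_def]; omega
        obtain ⟨m, hm, h3, h4⟩ := lemA hpart hnc hconsec ((c : ℕ) - x0) x0 c le_rfl hx0c W hW hx0 hc
        exact ⟨m, hm, by rw [Fin.lt_def] at h3; omega⟩
    -- V is not the singleton {i}
    have hVnotsing : ∃ c ∈ V, c ≠ i := by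
      by_contra h
      push_neg at h
      have hVi : V = {i} := Finset.eq_singleton_iff_unique_mem.mpr ⟨hiV, h⟩
      -- consider i+1
      have hi1n : (i : ℕ) + 1 < n := by omega
      set i1 : Fin n := ⟨(i : ℕ) + 1, hi1n⟩ with hi1def
      obtain ⟨W, ⟨hW, hi1W⟩, -⟩ := hpart.2 i1
      have hWV : W ≠ V := by
        intro hh
        rw [hVi] at hh
        have := hh ▸ hi1W
        rw [Finset.mem_singleton, Fin.ext_iff] at this
        have h' : (i1 : ℕ) = (i : ℕ) + 1 := rfl; omega
      have hWlo : ∀ w ∈ W, (i : ℕ) < (w : ℕ) := by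
        intro w hw
        by_contra hcon
        push_neg at hcon
        rcases Nat.lt_or_ge (w : ℕ) i with hlt | hge
        · rcases (hexcl W hW i1 hi1W w hw).1 hlt with he | he
          · rw [Fin.ext_iff] at he; simp only [hi1def] at he; omega
          · rw [Fin.ext_iff, hrevval] at he; simp only [hi1def] at he; omega
        · have hwi : w = i := by rw [Fin.ext_iff]; omega
          subst hwi
          exact hWV (blocks_eq hpart hW hV hw hiV)
      obtain ⟨m, hm, hmlo⟩ := hsingleton_in W i1 i hW hi1W rfl hWlo
      have := hsingle V hV {m} hm (by rw [hVi]; simp) (by simp)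
      rw [hVi] at this
      have := Finset.singleton_inj.mp this
      rw [Fin.ext_iff] at this
      omega
    obtain ⟨c0, hc0, hc0ne⟩ := hVnotsing
    -- b := max of V
    have hVne : V.Nonempty := ⟨i, hiV⟩
    set b : Fin n := V.max' hVne with hbdef
    have hb : b ∈ V := Finset.max'_mem V hVne
    have hble : ∀ a ∈ V, a ≤ b := fun a ha => Finset.le_max' V a ha
    have hc0i : (i : ℕ) < c0 := by
      have := hVsub c0 hc0
      rcases Nat.lt_or_ge (i : ℕ) (c0 : ℕ) with h | h
      · exact h
      · exact absurd (by rw [Fin.ext_iff]; omega : c0 = i) hc0ne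
    have hbi : (i : ℕ) < b := lt_of_lt_of_le hc0i (hble c0 hc0)
    have hbi2 : (i : ℕ) + 2 ≤ b := by
      rcases Nat.lt_or_ge ((i : ℕ) + 1) (b : ℕ) with h | h
      · omega
      · exact absurd (hconsec V hV i b hiV hb (by omega)) (fun h => h)
    have hbub : (b : ℕ) ≤ n - 1 - i := (hVsub b hb).2
    have hbrev : (b : ℕ) = n - 1 - i := by
      by_contra hblt'
      have hblt : (b : ℕ) < n - 1 - i := by omega
      have hb1n : (b : ℕ) + 1 < n := by omega
      set b1 : Fin n := ⟨(b : ℕ) + 1, hb1n⟩ with hb1def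
      obtain ⟨W, ⟨hW, hb1W⟩, -⟩ := hpart.2 b1
      have hb1V : b1 ∉ V := by
        intro hcon
        have := hble b1 hcon
        rw [Fin.le_def] at this
        simp only [hb1def] at this
        omega
      have hWV : W ≠ V := fun hh => hb1V (hh ▸ hb1W)
      have hWlo : ∀ w ∈ W, (b : ℕ) < (w : ℕ) := by
        intro w hw
        by_contra hcon
        push_neg at hcon
        rcases Nat.lt_or_ge (w : ℕ) (i : ℕ) with hlt | hge
        · rcases (hexcl W hW b1 hb1W w hw).1 hlt with he | he
          · rw [Fin.ext_iff] at he; simp only [hb1def] at he; omega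
          · rw [Fin.ext_iff, hrevval] at he; simp only [hb1def] at he; omega
        · by_cases hwV : w ∈ V
          · exact hWV (blocks_eq hpart hW hV hw hwV)
          · have hwi : (w : ℕ) ≠ (i : ℕ) := fun hh => hwV ((Fin.ext hh : w = i) ▸ hiV)
            have hwb : (w : ℕ) ≠ (b : ℕ) := fun hh => hwV ((Fin.ext hh : w = b) ▸ hb)
            have h1 : i < w := by rw [Fin.lt_def]; omega
            have h2 : w < b := by rw [Fin.lt_def]; omega
            have h3 : b < b1 := by rw [Fin.lt_def]; simp only [hb1def]; omega
            exact hWV (hnc i w b b1 h1 h2 h3 V hV W hW hiV hb hw hb1W).symm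
      obtain ⟨m1, hm1, hm1lo⟩ := hsingleton_in W b1 (b : ℕ) hW hb1W rfl hWlo
      have hib : i < b := by rw [Fin.lt_def]; omega
      obtain ⟨m2, hm2, hm2a, hm2b⟩ :=
        lemA hpart hnc hconsec ((b : ℕ) - i) i b le_rfl hib V hV hiV hb
      have heq := hsingle {m1} hm1 {m2} hm2 (by simp) (by simp)
      have := Finset.singleton_inj.mp heq
      rw [Fin.ext_iff] at this
      rw [Fin.lt_def] at hm2b
      omega
    have hbeq : b = i.rev := by rw [Fin.ext_iff, hrevval]; omega
    -- conclude V = {i, i.rev}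
    apply Finset.ext
    intro c
    constructor
    · intro hc
      have hsub := hVsub c hc
      simp only [Finset.mem_insert, Finset.mem_singleton]
      by_contra hcon
      push_neg at hcon
      obtain ⟨hne1, hne2⟩ := hcon
      have hne1' : (c : ℕ) ≠ (i : ℕ) := fun hh => hne1 (Fin.ext hh)
      have hne2' : (c : ℕ) ≠ n - 1 - (i : ℕ) := by
        intro hh; exact hne2 (by rw [Fin.ext_iff, hrevval]; omega)
      have h1 : i < c := by rw [Fin.lt_def]; omega
      have h2 : c < b := by rw [Fin.lt_def]; omega
      obtain ⟨m2, hm2, hm2a, hm2b⟩ :=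
        lemA hpart hnc hconsec ((c : ℕ) - i) i c le_rfl h1 V hV hiV hc
      obtain ⟨m1, hm1, hm1a, hm1b⟩ :=
        lemA hpart hnc hconsec ((b : ℕ) - c) c b le_rfl h2 V hV hc hb
      have heq := hsingle {m1} hm1 {m2} hm2 (by simp) (by simp)
      have := Finset.singleton_inj.mp heq
      rw [Fin.ext_iff] at this
      rw [Fin.lt_def] at hm2b hm1a
      omega
    · intro hc
      rcases Finset.mem_insert.mp hc with h | h
      · exact h ▸ hiV
      · rw [Finset.mem_singleton] at h
        rw [h, ← hbeq]
        exact hb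

end Aux

/-- A non-crossing partition of `{1, …, n}` with no block containing
two consecutive numbers and with at most one singleton block must be the pairing
`{{1, n}, {2, n−1}, …, {(n−1)/2, (n+3)/2}, {(n+1)/2}}`, and `n` must be odd. -/
theorem noncrossing_no_consecutive_at_most_one_singleton
    {n : ℕ} (hn : 1 ≤ n) (π : Finset (Finset (Fin n))) (hπ : π ∈ NC n)
    (hconsec : ∀ V ∈ π, ∀ p q : Fin n, p ∈ V → q ∈ V → (q : ℕ) = (p : ℕ) + 1 → False)
    (hsingle : ∀ V ∈ π, ∀ W ∈ π, V.card = 1 → W.card = 1 → V = W) :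
    Odd n ∧
      π = Finset.image (fun m : Fin n => ({m, m.rev} : Finset (Fin n)))
        Finset.univ := by
  have hπ' := hπ
  simp only [NC, Finset.mem_filter, Finset.mem_univ, true_and] at hπ'
  obtain ⟨hpart, hnc⟩ := hπ'

  have hrevval : ∀ c : Fin n, (c.rev : ℕ) = n - 1 - c := by
    intro c; simp [Fin.val_rev]; omega
  have hblk : ∀ i : Fin n, 2 * (i : ℕ) ≤ n - 1 → ∀ V ∈ π, i ∈ V → V = {i, i.rev} :=
    fun i h2 => lemB hpart hnc hconsec hsingle n i i.isLt h2
  have hblk2 : ∀ c : Fin n, ∀ V ∈ π, c ∈ V → V = {c, c.rev} := by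
    intro c V hV hcV
    rcases le_or_gt (2 * (c : ℕ)) (n - 1) with h | h
    · exact hblk c h V hV hcV
    · have h2 : 2 * ((c.rev : ℕ)) ≤ n - 1 := by rw [hrevval]; omega
      obtain ⟨U, ⟨hU, hcU⟩, -⟩ := hpart.2 c.rev
      have hUeq := hblk c.rev h2 U hU hcU
      have hcU2 : c ∈ U := by rw [hUeq, Fin.rev_rev]; simp
      have hVU := blocks_eq hpart hV hU hcV hcU2
      rw [hVU, hUeq, Fin.rev_rev, Finset.pair_comm]
  have h0n : 0 < n := hn
  set z : Fin n := ⟨0, h0n⟩ with hzdef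
  have hz0 : (z : ℕ) = 0 := rfl
  obtain ⟨V0, ⟨hV0, hzV0⟩, -⟩ := hpart.2 z
  have hV0eq := hblk2 z V0 hV0 hzV0
  have hsing : ∃ m : Fin n, ({m} : Finset (Fin n)) ∈ π := by
    by_cases h1 : n = 1
    · refine ⟨z, ?_⟩
      have hzz : z.rev = z := by rw [Fin.ext_iff, hrevval]; omega
      rw [hV0eq, hzz] at hV0
      simpa using hV0
    · have hzlt : z < z.rev := by rw [Fin.lt_def, hrevval]; omega
      obtain ⟨m, hm, -, -⟩ := lemA hpart hnc hconsec ((z.rev : ℕ) - z) z z.rev le_rfl hzlt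
        V0 hV0 hzV0 (by rw [hV0eq]; simp)
      exact ⟨m, hm⟩
  obtain ⟨m, hm⟩ := hsing
  have hmm : m.rev = m := by
    have hb := hblk2 m {m} hm (Finset.mem_singleton_self m)
    have h2 : m.rev ∈ ({m} : Finset (Fin n)) := by rw [hb]; simp
    rwa [Finset.mem_singleton] at h2
  have hodd : Odd n := by
    have hh := hrevval m
    rw [hmm] at hh
    exact ⟨(m : ℕ), by have := m.isLt; omega⟩
  refine ⟨hodd, ?_⟩
  apply Finset.ext
  intro V
  simp only [Finset.mem_image, Finset.mem_univ, true_and]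
  constructor
  · intro hV
    obtain ⟨c, hc⟩ := hpart.1 V hV
    exact ⟨c, (hblk2 c V hV hc).symm⟩
  · rintro ⟨a, rfl⟩
    obtain ⟨U, ⟨hU, haU⟩, -⟩ := hpart.2 a
    have hUeq := hblk2 a U hU haU
    rw [← hUeq]
    exact hU


end InfFree
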